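/- For t ≥ 2, the largest size of a partition with distinct parts that is simultaneously t-core and (t+1)-core equals floor((1/3)·C(t+1,2)) = floor(t(t+1)/6). -/

import Mathlib

/-- The hook length of the box in row i (0-indexed) and column j (1-indexed) of the Young
diagram of the partition (λ_1, ..., λ_ℓ): arm + leg + 1. -/
def hook (l : List ℕ) (i j : ℕ) : ℕ :=
  (l.getD i 0 - j) + ((l.drop (i + 1)).filter (fun p => decide (j ≤ p))).length + 1

/-- A partition is an s-core if none of its hook lengths equals s. -/
def IsCore (l : List ℕ) (s : ℕ) : Prop :=
  ∀ i j, i < l.length → 1 ≤ j → j ≤ l.getD i 0 → hook l i j ≠ s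


lemma hook_zero (a j : ℕ) (rest : List ℕ) :
    hook (a :: rest) 0 j = (a - j) + (rest.filter (fun p => decide (j ≤ p))).length + 1 := rfl

lemma hook_top (a : ℕ) (rest : List ℕ) (h : ∀ p ∈ rest, p < a) :
    hook (a :: rest) 0 a = 1 := by
  rw [hook_zero]
  have : rest.filter (fun p => decide (a ≤ p)) = [] := by
    rw [List.filter_eq_nil_iff]
    intro p hp
    simpa using Nat.not_le.mpr (h p hp)
  simp [this]

lemma hook_one (a : ℕ) (rest : List ℕ) (ha : 1 ≤ a) (h : ∀ p ∈ rest, 0 < p) :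
    hook (a :: rest) 0 1 = a + rest.length := by
  rw [hook_zero]
  have : rest.filter (fun p => decide (1 ≤ p)) = rest := by
    rw [List.filter_eq_self]
    intro p hp
    have := h p hp; simp; omega
  rw [this]; omega

lemma countP_step (j : ℕ) (L : List ℕ) :
    L.countP (fun p => decide (j ≤ p)) ≤ L.countP (fun p => decide (j+1 ≤ p)) + L.count j := by
  induction L with
  | nil => simp
  | cons x xs ih =>
    simp only [List.countP_cons, List.count_cons]
    rcases le_or_gt (j+1) x with h | h
    · have h1 : decide (j ≤ x) = true := by simp; omega
      have h2 : decide (j+1 ≤ x) = true := by simp; omega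
      simp [h1, h2, show j < x by omega, show x ≠ j by omega] at ih ⊢; omega
    · rcases eq_or_lt_of_le (Nat.lt_succ_iff.mp h) with he | hlt
      · have h1 : decide (j ≤ x) = true := by simp [he]
        have h2 : decide (j+1 ≤ x) = false := by simp; omega
        simp [h1, h2, he] at ih ⊢; omega
      · have h1 : decide (j ≤ x) = false := by simp; omega
        have h2 : decide (j+1 ≤ x) = false := by simp; omega
        have h3 : (x = j) = False := by simp; omega
        simp [h1, h2, h3, show ¬ j < x by omega] at ih ⊢; omega

lemma hook_step (a j : ℕ) (rest : List ℕ) (hj : j < a) (hnd : rest.Nodup) :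
    hook (a :: rest) 0 j ≤ hook (a :: rest) 0 (j+1) + 2 := by
  rw [hook_zero, hook_zero]
  rw [← List.countP_eq_length_filter, ← List.countP_eq_length_filter]
  have h1 := countP_step j rest
  have h2 : rest.count j ≤ 1 := List.nodup_iff_count_le_one.mp hnd j
  omega

lemma perimeter_le (t a : ℕ) (rest : List ℕ) (ht : 2 ≤ t)
    (hs : (a :: rest).Pairwise (· > ·)) (hpos : ∀ p ∈ a :: rest, 0 < p)
    (h1 : IsCore (a :: rest) t) (h2 : IsCore (a :: rest) (t+1)) :
    a + rest.length + 1 ≤ t := by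
  have ha : 0 < a := hpos a (by simp)
  have hlt : ∀ p ∈ rest, p < a := fun p hp => (List.pairwise_cons.mp hs).1 p hp
  have hnd : rest.Nodup := by
    exact (List.pairwise_cons.mp hs).2.nodup
  have key : ∀ d j, 1 ≤ j → j ≤ a → a - j = d → t ≤ hook (a :: rest) 0 j → False := by
    intro d
    induction d with
    | zero =>
      intro j hj1 hj2 hd hhook
      have : j = a := by omega
      rw [this, hook_top a rest hlt] at hhook
      omega
    | succ d ih =>
      intro j hj1 hj2 hd hhook
      rcases le_or_gt (hook (a :: rest) 0 j) (t+1) with hle | hgt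
      · rcases eq_or_lt_of_le hhook with he | hlt2
        · exact h1 0 j (by simp) hj1 (by simpa using hj2) he.symm
        · have : hook (a :: rest) 0 j = t + 1 := by omega
          exact h2 0 j (by simp) hj1 (by simpa using hj2) this
      · have hja : j < a := by omega
        have := hook_step a j rest hja hnd
        exact ih (j+1) (by omega) (by omega) (by omega) (by omega)
  have h3 : ¬ t ≤ hook (a :: rest) 0 1 := fun h => key (a-1) 1 le_rfl ha rfl h
  rw [hook_one a rest ha (fun p hp => hpos p (List.mem_cons_of_mem a hp))] at h3
  omega

lemma sum_bound : ∀ l : List ℕ, l.Pairwise (· > ·) →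
    2 * l.sum + l.length * l.length ≤ l.length * (2 * l.getD 0 0 + 1) := by
  intro l
  induction l with
  | nil => simp
  | cons a rest ih =>
    intro hs
    have hs' : rest.Pairwise (· > ·) := (List.pairwise_cons.mp hs).2
    have := ih hs'
    match rest with
    | [] => simp
    | b :: rest' =>
      have hba : b < a := (List.pairwise_cons.mp hs).1 b (by simp)
      simp only [List.sum_cons, List.length_cons, List.getD_cons_zero] at *
      set r := rest'.length + 1 with hr
      have hmul : r * (2 * b + 1) + r * 2 ≤ r * (2 * a + 1) := by
        have : r * (2 * b + 3) ≤ r * (2 * a + 1) := Nat.mul_le_mul_left r (by omega)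
        nlinarith [this]
      nlinarith [this, hmul]

lemma key_arith (t ℓ a s : ℕ) (h1 : a + ℓ ≤ t) (h2 : 2*s + ℓ*ℓ ≤ ℓ*(2*a+1)) :
    s ≤ t*(t+1)/6 := by
  rw [Nat.le_div_iff_mul_le (by norm_num)]
  -- need s * 6 ≤ t * (t+1)
  zify at h1 h2 ⊢
  rcases le_or_gt (3*ℓ) t with h | h
  · nlinarith [h1, h2, h]
  · nlinarith [h1, h2, h]

lemma core_of_small (l : List ℕ) (s : ℕ)
    (hhead : ∀ i, i < l.length → l.getD i 0 + l.length ≤ s) : IsCore l s := by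
  intro i j hi hj1 _
  unfold hook
  have h1 := hhead i hi
  have h2 : ((l.drop (i+1)).filter (fun p => decide (j ≤ p))).length ≤ l.length - (i+1) := by
    calc ((l.drop (i+1)).filter (fun p => decide (j ≤ p))).length
        ≤ (l.drop (i+1)).length := List.length_filter_le _ _
      _ = l.length - (i+1) := List.length_drop
  omega

lemma stair_sum : ∀ n a : ℕ, n ≤ a →
    2 * (((List.range n).map (fun i => a - i)).sum) + n * n = n * (2 * a + 1) := by
  intro n
  induction n with
  | zero => simp
  | succ n ih =>
    intro a ha
    rw [List.range_succ, List.map_append, List.sum_append]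
    have h := ih a (by omega)
    simp only [List.map_cons, List.map_nil, List.sum_cons, List.sum_nil]
    zify [show n ≤ a by omega] at h ⊢
    linear_combination h

lemma stair_getD (ℓ a i : ℕ) (hi : i < ℓ) :
    ((List.range ℓ).map (fun i => a - i)).getD i 0 = a - i := by
  have hlen : i < ((List.range ℓ).map (fun i => a - i)).length := by simpa using hi
  rw [List.getD_eq_getElem _ _ hlen]
  simp

lemma stair_all (t ℓ a : ℕ) (hla : a + ℓ = t) (h2 : ℓ ≤ a) :
    ∃ l : List ℕ, l.Pairwise (· > ·) ∧ (∀ p ∈ l, 0 < p) ∧ IsCore l t ∧ IsCore l (t+1) ∧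
      2 * l.sum + ℓ * ℓ = ℓ * (2 * a + 1) := by
  refine ⟨(List.range ℓ).map (fun i => a - i), ?_, ?_, ?_, ?_, stair_sum ℓ a h2⟩
  · rw [List.pairwise_iff_getElem]
    intro i j hi hj hij
    simp only [List.getElem_map, List.getElem_range]
    simp at hi hj
    omega
  · intro p hp
    rw [List.mem_map] at hp
    obtain ⟨i, hi, rfl⟩ := hp
    rw [List.mem_range] at hi
    omega
  all_goals {
    apply core_of_small
    intro i hi
    simp only [List.length_map, List.length_range] at hi ⊢
    rw [stair_getD ℓ a i hi]
    omega }

/-- The largest size of a (t, t+1)-core partition with distinct parts is ⌊t(t+1)/6⌋. -/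
theorem largest_size_distinct_core (t : ℕ) (ht : 2 ≤ t) :
    IsGreatest {n : ℕ | ∃ l : List ℕ, l.Pairwise (· > ·) ∧ (∀ p ∈ l, 0 < p) ∧
      IsCore l t ∧ IsCore l (t + 1) ∧ l.sum = n} (t * (t + 1) / 6) := by
  constructor
  · have h3 : t % 3 = 0 ∨ t % 3 = 1 ∨ t % 3 = 2 := by omega
    rcases h3 with h3 | h3 | h3
    · obtain ⟨k, hk⟩ : ∃ k, t = 3*k := ⟨t/3, by omega⟩
      obtain ⟨l, hs, hpos, hc1, hc2, hsum⟩ := stair_all t k (2*k) (by omega) (by omega)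
      refine ⟨l, hs, hpos, hc1, hc2, ?_⟩
      have h6 : t * (t+1) = 6 * l.sum := by
        rw [hk]; zify at hsum ⊢; linear_combination (-3 : ℤ) * hsum
      rw [h6]; omega
    · obtain ⟨k, hk⟩ : ∃ k, t = 3*k+1 := ⟨t/3, by omega⟩
      obtain ⟨l, hs, hpos, hc1, hc2, hsum⟩ := stair_all t k (2*k+1) (by omega) (by omega)
      refine ⟨l, hs, hpos, hc1, hc2, ?_⟩
      have h6 : t * (t+1) = 6 * l.sum + 2 := by
        rw [hk]; zify at hsum ⊢; linear_combination (-3 : ℤ) * hsum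
      rw [h6]; omega
    · obtain ⟨k, hk⟩ : ∃ k, t = 3*k+2 := ⟨t/3, by omega⟩
      obtain ⟨l, hs, hpos, hc1, hc2, hsum⟩ := stair_all t (k+1) (2*k+1) (by omega) (by omega)
      refine ⟨l, hs, hpos, hc1, hc2, ?_⟩
      have h6 : t * (t+1) = 6 * l.sum := by
        rw [hk]; zify at hsum ⊢; linear_combination (-3 : ℤ) * hsum
      rw [h6]; omega
  · rintro n ⟨l, hs, hpos, hc1, hc2, rfl⟩
    cases l with
    | nil => simp
    | cons a rest =>
      have hp := perimeter_le t a rest ht hs hpos hc1 hc2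
      have hb := sum_bound (a :: rest) hs
      simp only [List.length_cons, List.getD_cons_zero] at hb
      exact key_arith t (rest.length + 1) a _ (by omega) hb
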